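/- For every λ ∈ ℤ^N and every 1 ≤ i ≤ N: i is normal for λ if and only if B_{i,N}(λ) ↓ C_{i,N}(λ). -/

import Mathlib

namespace Kujawa

open Finset

variable {n : ℕ}

/-- The sign `(−1)^{p̄ i}` attached to the parity sequence `pb`. -/
def sg (pb : Fin (n + 1) → ZMod 2) (i : Fin (n + 1)) : ℤ :=
  if pb i = 0 then 1 else -1

/-- `ϑ_j = ∑_{i > j} (−1)^{p̄_i + p̄_j}`. -/
def theta (pb : Fin (n + 1) → ZMod 2) (j : Fin (n + 1)) : ℤ :=
  ∑ i ∈ Finset.Ioi j, sg pb i * sg pb j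

/-- The standard basis vector `ε_i` of `X(T) = ℤ^N`. -/
def eps (i : Fin (n + 1)) : Fin (n + 1) → ℤ := fun j => if j = i then 1 else 0

/-- The `j`-th residue `r_j(λ) = (λ + ϑ, ε_j)`. -/
def res (pb : Fin (n + 1) → ZMod 2) (l : Fin (n + 1) → ℤ) (j : Fin (n + 1)) : ℤ :=
  sg pb j * (l j + theta pb j)

/-- `ρ = ϑ + ∑_{i : p̄_i = 0} ε_i`, coordinatewise. -/
def rho (pb : Fin (n + 1) → ZMod 2) (k : Fin (n + 1)) : ℤ :=
  theta pb k + (if pb k = 0 then 1 else 0)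

/-- `l(λ) = ∑ λ_i`. -/
def ell (l : Fin (n + 1) → ℤ) : ℤ := ∑ i, l i

/-- The central character value `Z_r(λ)`. -/
def Zint (pb : Fin (n + 1) → ZMod 2) (r : ℕ) (l : Fin (n + 1) → ℤ) : ℤ :=
  ∑ s ∈ Finset.Icc 1 r, (-1 : ℤ) ^ (s - 1) *
    ∑ K ∈ Finset.powersetCard s (Finset.univ : Finset (Fin (n + 1))),
      ∑ a ∈ Fintype.piFinset (fun _ : Fin (n + 1) => Finset.range (r + 2)),
        if (∑ k ∈ K, a k) = r - s + 1 ∧ (∀ k, k ∉ K → a k = 0) then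
          (∏ k ∈ K, sg pb k) * ∏ k ∈ K, res pb l k ^ a k
        else 0

/-- `A_r(λ) = #{i : r_i(λ+ε_i) ≡ r (mod p)}`. -/
def Acount (pb : Fin (n + 1) → ZMod 2) (p : ℕ) (r : ZMod p) (l : Fin (n + 1) → ℤ) : ℕ :=
  (Finset.univ.filter fun i : Fin (n + 1) => ((res pb (l + eps i) i : ℤ) : ZMod p) = r).card

/-- `B_r(λ) = #{i : r_i(λ) ≡ r (mod p)}`. -/
def Bcount (pb : Fin (n + 1) → ZMod 2) (p : ℕ) (r : ZMod p) (l : Fin (n + 1) → ℤ) : ℕ :=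
  (Finset.univ.filter fun i : Fin (n + 1) => ((res pb l i : ℤ) : ZMod p) = r).card

/-- For `p = 0`: `γ_a` is the basis element `single a 1` of the free module `ℤ →₀ ℤ`. -/
noncomputable def gamma0 (a : ℤ) : ℤ →₀ ℤ := Finsupp.single a 1

/-- `wt` for `p = 0`, with values in the free `ℤ`-module on basis `{γ_a : a ∈ ℤ}`. -/
noncomputable def wt0 (pb : Fin (n + 1) → ZMod 2) (l : Fin (n + 1) → ℤ) : ℤ →₀ ℤ :=
  ∑ i : Fin (n + 1), sg pb i • gamma0 (sg pb i * (l i + rho pb i))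

/-- `Λ_r ∈ P = ℤδ ⊕ ⊕_{r ∈ ℤ/pℤ} ℤΛ_r`. -/
def LamP (p : ℕ) (r : ZMod p) : ℤ × (ZMod p → ℤ) := (0, fun s => if s = r then 1 else 0)

/-- `δ ∈ P`. -/
def delP (p : ℕ) : ℤ × (ZMod p → ℤ) := (1, 0)

/-- `γ_a = Λ_{s mod p} − Λ_{(s−1) mod p} − d·δ`, where `a = p·d + s` with `1 ≤ s ≤ p`. -/
def gammaP (p : ℕ) (a : ℤ) : ℤ × (ZMod p → ℤ) :=
  LamP p (((a - 1) % (p : ℤ) + 1 : ℤ) : ZMod p) - LamP p (((a - 1) % (p : ℤ) : ℤ) : ZMod p) -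
    ((a - 1) / (p : ℤ)) • delP p

/-- `wt` for prime `p`. -/
def wtP (p : ℕ) (pb : Fin (n + 1) → ZMod 2) (l : Fin (n + 1) → ℤ) : ℤ × (ZMod p → ℤ) :=
  ∑ i : Fin (n + 1), sg pb i • gammaP p (sg pb i * (l i + rho pb i))

/-- Entry `i` of the `r`-signature of `λ`: `1` codes `+`, `-1` codes `−`, `0` codes `0`. -/
def sig (pb : Fin (n + 1) → ZMod 2) (p : ℕ) (r : ZMod p) (l : Fin (n + 1) → ℤ)
    (i : Fin (n + 1)) : ℤ :=
  if ((res pb (l + eps i) i : ℤ) : ZMod p) = r then 1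
  else if ((res pb l i : ℤ) : ZMod p) = r then -1
  else 0

/-- Number of `−`'s of the `r`-signature of `λ` in positions `[i..j]`. -/
noncomputable def nM (pb : Fin (n + 1) → ZMod 2) (p : ℕ) (r : ZMod p) (l : Fin (n + 1) → ℤ)
    (i j : Fin (n + 1)) : ℕ :=
  Set.ncard {k : Fin (n + 1) | k ∈ Finset.Icc i j ∧ sig pb p r l k = -1}

/-- Number of `+`'s of the `r`-signature of `λ` in positions `[i..j]`. -/
noncomputable def nP (pb : Fin (n + 1) → ZMod 2) (p : ℕ) (r : ZMod p) (l : Fin (n + 1) → ℤ)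
    (i j : Fin (n + 1)) : ℕ :=
  Set.ncard {k : Fin (n + 1) | k ∈ Finset.Icc i j ∧ sig pb p r l k = 1}

/-- `i` is the position of a `−` in the reduced `r`-signature of `λ` (i.e. `i` is
`r`-normal for `λ`): the `−` at `i` is never cancelled, which happens exactly when every
interval `[i..j]` contains strictly more `−`'s than `+`'s. -/
def RMinus (pb : Fin (n + 1) → ZMod 2) (p : ℕ) (r : ZMod p) (l : Fin (n + 1) → ℤ)
    (i : Fin (n + 1)) : Prop :=
  sig pb p r l i = -1 ∧ ∀ j : Fin (n + 1), i ≤ j → nP pb p r l i j < nM pb p r l i j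

/-- `i` is the position of a `+` in the reduced `r`-signature of `λ` (i.e. `i` is
`r`-conormal for `λ`). -/
def RPlus (pb : Fin (n + 1) → ZMod 2) (p : ℕ) (r : ZMod p) (l : Fin (n + 1) → ℤ)
    (i : Fin (n + 1)) : Prop :=
  sig pb p r l i = 1 ∧ ∀ j : Fin (n + 1), j ≤ i → nM pb p r l j i < nP pb p r l j i

/-- `i` is the position of the leftmost `−` in the reduced `r`-signature (`r`-good). -/
def RGood (pb : Fin (n + 1) → ZMod 2) (p : ℕ) (r : ZMod p) (l : Fin (n + 1) → ℤ)
    (i : Fin (n + 1)) : Prop :=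
  RMinus pb p r l i ∧ ∀ j : Fin (n + 1), j < i → ¬ RMinus pb p r l j

/-- `i` is the position of the rightmost `+` in the reduced `r`-signature (`r`-cogood). -/
def RCogood (pb : Fin (n + 1) → ZMod 2) (p : ℕ) (r : ZMod p) (l : Fin (n + 1) → ℤ)
    (i : Fin (n + 1)) : Prop :=
  RPlus pb p r l i ∧ ∀ j : Fin (n + 1), i < j → ¬ RPlus pb p r l j

open Classical in
/-- The crystal operator `ẽ*_r`, with `none` playing the role of `0`. -/
noncomputable def eStar (pb : Fin (n + 1) → ZMod 2) (p : ℕ) (r : ZMod p)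
    (l : Fin (n + 1) → ℤ) : Option (Fin (n + 1) → ℤ) :=
  if h : (Finset.univ.filter (RMinus pb p r l)).Nonempty then
    some (l - eps ((Finset.univ.filter (RMinus pb p r l)).min' h))
  else none

open Classical in
/-- The crystal operator `f̃*_r`, with `none` playing the role of `0`. -/
noncomputable def fStar (pb : Fin (n + 1) → ZMod 2) (p : ℕ) (r : ZMod p)
    (l : Fin (n + 1) → ℤ) : Option (Fin (n + 1) → ℤ) :=
  if h : (Finset.univ.filter (RPlus pb p r l)).Nonempty then
    some (l + eps ((Finset.univ.filter (RPlus pb p r l)).max' h))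
  else none

/-- `A ↓ B`: there is an injection `θ : A → B` with `θ a ≤ a` for all `a ∈ A`. -/
def Down (A B : Finset (Fin (n + 1))) : Prop :=
  ∃ θ : Fin (n + 1) → Fin (n + 1), Set.InjOn θ ↑A ∧ ∀ a ∈ A, θ a ∈ B ∧ θ a ≤ a

/-- `C_{i,j}(λ) = {h ∈ (i..j) : c_{i,h}(λ) ≡ 0 (mod p)}`. -/
def Cset (pb : Fin (n + 1) → ZMod 2) (p : ℕ) (l : Fin (n + 1) → ℤ) (i j : Fin (n + 1)) :
    Finset (Fin (n + 1)) :=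
  (Finset.Ioo i j).filter fun h => ((res pb l i - res pb l h : ℤ) : ZMod p) = 0

/-- `B_{i,j}(λ) = {h ∈ [i..j) : b_{i,h}(λ) ≡ 0 (mod p)}`. -/
def Bset (pb : Fin (n + 1) → ZMod 2) (p : ℕ) (l : Fin (n + 1) → ℤ) (i j : Fin (n + 1)) :
    Finset (Fin (n + 1)) :=
  (Finset.Ico i j).filter fun h =>
    ((res pb l i - res pb (l + eps (h + 1)) (h + 1) : ℤ) : ZMod p) = 0

/-- The opposite parity sequence `p̄′_k = p̄_{w₀ k} + 1̄`, where `w₀ k = N + 1 − k`. -/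
def pbRev (pb : Fin (n + 1) → ZMod 2) : Fin (n + 1) → ZMod 2 := fun k => pb k.rev + 1

/-- `s̃ : ℤ^N → ℤ^N`, `(s̃ λ)_{w₀ i} = −λ_i`. -/
def stilde (l : Fin (n + 1) → ℤ) : Fin (n + 1) → ℤ := fun k => -l k.rev

/-- `(i, j)` is an `r`-canceling pair for `λ` (for `i < j`). -/
def CPair (pb : Fin (n + 1) → ZMod 2) (p : ℕ) (r : ZMod p) (l : Fin (n + 1) → ℤ)
    (i j : Fin (n + 1)) : Prop :=
  sig pb p r l i = -1 ∧ sig pb p r l j = 1 ∧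
    ∀ k : Fin (n + 1), i < k → k < j → sig pb p r l k = 0

/-- `(i i+1)·λ`: interchange coordinates `i` and `i+1`. -/
def swapL (i : Fin (n + 1)) (l : Fin (n + 1) → ℤ) : Fin (n + 1) → ℤ :=
  fun k => if k = i then l (i + 1) else if k = i + 1 then l i else l k

/-- The parity sequence obtained from `pb` by interchanging entries `i` and `i+1`. -/
def pbSwap (pb : Fin (n + 1) → ZMod 2) (i : Fin (n + 1)) : Fin (n + 1) → ZMod 2 :=
  fun k => if k = i then pb (i + 1) else if k = i + 1 then pb i else pb k

/-- The odd reflection `s_i` on `X(T)`. -/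
def sI (pb : Fin (n + 1) → ZMod 2) (p : ℕ) (i : Fin (n + 1)) (l : Fin (n + 1) → ℤ) :
    Fin (n + 1) → ℤ :=
  if ((sg pb i * l i - sg pb (i + 1) * l (i + 1) : ℤ) : ZMod p) = 0 then swapL i l
  else swapL i l + eps i - eps (i + 1)

section Statement7Aux

variable (pb : Fin (n + 1) → ZMod 2) (p : ℕ) (r : ZMod p) (l : Fin (n + 1) → ℤ) (i : Fin (n + 1))

lemma res_add_eps (k : Fin (n + 1)) : res pb (l + eps k) k = res pb l k + sg pb k := by
  simp only [res, eps, Pi.add_apply, eq_self_iff_true, if_true]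
  ring

lemma sg_cast_ne_zero (hp : p = 0 ∨ p.Prime) (k : Fin (n + 1)) :
    ((sg pb k : ℤ) : ZMod p) ≠ 0 := by
  have hp1 : p ≠ 1 := by
    rcases hp with h | h
    · omega
    · exact h.ne_one
  have h1 : ((1 : ℤ) : ZMod p) ≠ 0 := by
    intro h
    have h2 : ((1 : ℕ) : ZMod p) = 0 := by exact_mod_cast h
    exact hp1 (Nat.dvd_one.mp ((CharP.cast_eq_zero_iff (ZMod p) p 1).mp h2))
  unfold sg
  split
  · exact h1
  · intro h
    rw [Int.cast_neg, neg_eq_zero] at h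
    exact h1 h

lemma sig_eq_one_iff (k : Fin (n + 1)) :
    sig pb p r l k = 1 ↔ ((res pb (l + eps k) k : ℤ) : ZMod p) = r := by
  constructor
  · intro h
    unfold sig at h
    split_ifs at h with h1 h2
    · exact h1
    · norm_num at h
  · intro h
    unfold sig
    rw [if_pos h]

lemma sig_eq_neg_one_iff (hp : p = 0 ∨ p.Prime) (k : Fin (n + 1)) :
    sig pb p r l k = -1 ↔ ((res pb l k : ℤ) : ZMod p) = r := by
  constructor
  · intro h
    unfold sig at h
    split_ifs at h with h1 h2
    exact h2
  · intro h
    have hne : ¬ ((res pb (l + eps k) k : ℤ) : ZMod p) = r := by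
      rw [res_add_eps]
      push_cast
      intro hc
      rw [h] at hc
      exact sg_cast_ne_zero pb p hp k (by exact_mod_cast add_eq_left.mp hc)
    unfold sig
    rw [if_neg hne, if_pos h]

/-- Number of `+`'s of the `r`-signature strictly after `i`, up to value `t`. -/
def Pcnt (t : ℕ) : ℕ :=
  ((Finset.univ : Finset (Fin (n + 1))).filter
    fun k => i < k ∧ k.val ≤ t ∧ sig pb p r l k = 1).card

/-- Number of `−`'s of the `r`-signature strictly after `i`, up to value `t`. -/
def Mcnt (t : ℕ) : ℕ :=
  ((Finset.univ : Finset (Fin (n + 1))).filter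
    fun k => i < k ∧ k.val ≤ t ∧ sig pb p r l k = -1).card

lemma Mcnt_mono {s t : ℕ} (h : s ≤ t) : Mcnt pb p r l i s ≤ Mcnt pb p r l i t := by
  apply Finset.card_le_card
  intro k hk
  simp only [Finset.mem_filter, Finset.mem_univ, true_and] at hk ⊢
  exact ⟨hk.1, le_trans hk.2.1 h, hk.2.2⟩

lemma Pcnt_eq_zero_of_le {t : ℕ} (h : t ≤ i.val) : Pcnt pb p r l i t = 0 := by
  rw [Pcnt, Finset.card_eq_zero]
  ext k
  simp only [Finset.mem_filter, Finset.mem_univ, true_and, Finset.notMem_empty, iff_false,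
    not_and, Fin.lt_def]
  intro h1 h2
  omega

lemma Pcnt_stable {s t : ℕ} (hs : n ≤ s) (ht : n ≤ t) :
    Pcnt pb p r l i s = Pcnt pb p r l i t := by
  unfold Pcnt
  congr 1
  ext k
  have hk := k.isLt
  simp only [Finset.mem_filter, Finset.mem_univ, true_and]
  constructor
  · rintro ⟨h1, _, h3⟩; exact ⟨h1, by omega, h3⟩
  · rintro ⟨h1, _, h3⟩; exact ⟨h1, by omega, h3⟩

lemma nM_eq (hsig : sig pb p r l i = -1) (j : Fin (n + 1)) (hij : i ≤ j) :
    nM pb p r l i j = Mcnt pb p r l i j.val + 1 := by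
  unfold nM
  have hset : {k : Fin (n + 1) | k ∈ Finset.Icc i j ∧ sig pb p r l k = -1} =
      ↑((Finset.univ : Finset (Fin (n + 1))).filter
        fun k => k ∈ Finset.Icc i j ∧ sig pb p r l k = -1) := by
    ext k; simp
  rw [hset, Set.ncard_coe_finset]
  have h2 : ((Finset.univ : Finset (Fin (n + 1))).filter
      fun k => k ∈ Finset.Icc i j ∧ sig pb p r l k = -1) =
      insert i ((Finset.univ : Finset (Fin (n + 1))).filter
        fun k => i < k ∧ k.val ≤ j.val ∧ sig pb p r l k = -1) := by
    ext k
    simp only [Finset.mem_filter, Finset.mem_univ, true_and, Finset.mem_insert, Finset.mem_Icc]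
    constructor
    · rintro ⟨⟨ha, hb⟩, hc⟩
      rcases eq_or_lt_of_le ha with h | h
      · exact Or.inl h.symm
      · exact Or.inr ⟨h, Fin.le_def.mp hb, hc⟩
    · rintro (rfl | ⟨ha, hb, hc⟩)
      · exact ⟨⟨le_refl _, hij⟩, hsig⟩
      · exact ⟨⟨le_of_lt ha, Fin.le_def.mpr hb⟩, hc⟩
  rw [h2, Finset.card_insert_of_notMem (by simp)]
  rfl

lemma nP_eq (hsig : sig pb p r l i = -1) (j : Fin (n + 1)) :
    nP pb p r l i j = Pcnt pb p r l i j.val := by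
  unfold nP
  have hset : {k : Fin (n + 1) | k ∈ Finset.Icc i j ∧ sig pb p r l k = 1} =
      ↑((Finset.univ : Finset (Fin (n + 1))).filter
        fun k => i < k ∧ k.val ≤ j.val ∧ sig pb p r l k = 1) := by
    ext k
    simp only [Finset.coe_filter, Finset.mem_univ, true_and, Set.mem_setOf_eq, Finset.mem_Icc]
    constructor
    · rintro ⟨⟨ha, hb⟩, hc⟩
      rcases eq_or_lt_of_le ha with h | h
      · exfalso; rw [← h] at hc; rw [hsig] at hc; norm_num at hc
      · exact ⟨h, Fin.le_def.mp hb, hc⟩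
    · rintro ⟨ha, hb, hc⟩
      exact ⟨⟨le_of_lt ha, Fin.le_def.mpr hb⟩, hc⟩
  rw [hset, Set.ncard_coe_finset]
  rfl

lemma mem_Bset_iff {r : ZMod p} (hr : r = ((res pb l i : ℤ) : ZMod p)) (h : Fin (n + 1)) :
    h ∈ Bset pb p l i (Fin.last n) ↔
      i ≤ h ∧ h.val < n ∧ sig pb p r l (h + 1) = 1 := by
  unfold Bset
  rw [Finset.mem_filter, Finset.mem_Ico, sig_eq_one_iff]
  constructor
  · rintro ⟨⟨h1, h2⟩, h3⟩
    refine ⟨h1, by simpa [Fin.lt_def] using h2, ?_⟩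
    rw [Int.cast_sub, sub_eq_zero] at h3
    rw [hr]
    exact h3.symm
  · rintro ⟨h1, h2, h3⟩
    refine ⟨⟨h1, by simpa [Fin.lt_def] using h2⟩, ?_⟩
    rw [Int.cast_sub, sub_eq_zero, ← hr]
    exact h3.symm

lemma mem_Cset_iff (hp : p = 0 ∨ p.Prime) {r : ZMod p} (hr : r = ((res pb l i : ℤ) : ZMod p))
    (h : Fin (n + 1)) :
    h ∈ Cset pb p l i (Fin.last n) ↔
      i < h ∧ h.val < n ∧ sig pb p r l h = -1 := by
  unfold Cset
  rw [Finset.mem_filter, Finset.mem_Ioo, sig_eq_neg_one_iff pb p r l hp h]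
  constructor
  · rintro ⟨⟨h1, h2⟩, h3⟩
    refine ⟨h1, by simpa [Fin.lt_def] using h2, ?_⟩
    rw [Int.cast_sub, sub_eq_zero] at h3
    rw [hr]
    exact h3.symm
  · rintro ⟨h1, h2, h3⟩
    refine ⟨⟨h1, by simpa [Fin.lt_def] using h2⟩, ?_⟩
    rw [Int.cast_sub, sub_eq_zero, ← hr]
    exact h3.symm

/-- `|B_{i,N}(λ) ∩ [0..t]|`. -/
def Bpref (t : ℕ) : ℕ := ((Bset pb p l i (Fin.last n)).filter fun h => h.val ≤ t).card

/-- `|C_{i,N}(λ) ∩ [0..t]|`. -/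
def Cpref (t : ℕ) : ℕ := ((Cset pb p l i (Fin.last n)).filter fun h => h.val ≤ t).card

lemma Cpref_mono {s t : ℕ} (hst : s ≤ t) : Cpref pb p l i s ≤ Cpref pb p l i t := by
  apply Finset.card_le_card
  intro h hh
  rw [Finset.mem_filter] at hh ⊢
  exact ⟨hh.1, hh.2.trans hst⟩

lemma Bpref_eq_Pcnt {r : ZMod p} (hr : r = ((res pb l i : ℤ) : ZMod p)) (t : ℕ) :
    Bpref pb p l i t = Pcnt pb p r l i (t + 1) := by
  unfold Bpref Pcnt
  apply Finset.card_nbij' (fun h => h + 1) (fun k => k - 1)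
  · intro a ha
    rw [Finset.mem_coe, Finset.mem_filter] at ha
    obtain ⟨haB, hat⟩ := ha
    rw [mem_Bset_iff pb p l i hr] at haB
    obtain ⟨h1, h2, h3⟩ := haB
    have hv : (a + 1).val = a.val + 1 :=
      Fin.val_add_one_of_lt (by rw [Fin.lt_def, Fin.val_last]; exact h2)
    simp only [Finset.mem_coe, Finset.mem_filter, Finset.mem_univ, true_and]
    refine ⟨?_, by omega, h3⟩
    rw [Fin.lt_def, hv]
    have := Fin.le_def.mp h1
    omega
  · intro k hk
    simp only [Finset.mem_coe, Finset.mem_filter, Finset.mem_univ, true_and] at hk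
    obtain ⟨h1, h2, h3⟩ := hk
    have hk0 : k ≠ 0 := (lt_of_le_of_lt (Fin.zero_le i) h1).ne'
    have hkpos : 0 < k.val := by
      have := Fin.lt_def.mp h1
      omega
    have hkv : (k - 1).val = k.val - 1 := by
      rw [Fin.coe_sub_one, if_neg hk0]
    have hkk : k - 1 + 1 = k := sub_add_cancel k 1
    rw [Finset.mem_coe, Finset.mem_filter, mem_Bset_iff pb p l i hr]
    have hkn := k.isLt
    beta_reduce
    refine ⟨⟨Fin.le_def.mpr (by omega), by omega, by rw [hkk]; exact h3⟩, by omega⟩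
  · intro a _
    exact add_sub_cancel_right a 1
  · intro k _
    exact sub_add_cancel k 1

lemma Cpref_le_Mcnt (hp : p = 0 ∨ p.Prime) {r : ZMod p}
    (hr : r = ((res pb l i : ℤ) : ZMod p)) (t : ℕ) :
    Cpref pb p l i t ≤ Mcnt pb p r l i t := by
  apply Finset.card_le_card
  intro h hh
  rw [Finset.mem_filter] at hh
  obtain ⟨hC, ht⟩ := hh
  rw [mem_Cset_iff pb p l i hp hr] at hC
  simp only [Finset.mem_filter, Finset.mem_univ, true_and]
  exact ⟨hC.1, ht, hC.2.2⟩

lemma Cpref_eq_Mcnt (hp : p = 0 ∨ p.Prime) {r : ZMod p}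
    (hr : r = ((res pb l i : ℤ) : ZMod p)) {t : ℕ} (htn : t < n) :
    Cpref pb p l i t = Mcnt pb p r l i t := by
  unfold Cpref Mcnt
  congr 1
  ext h
  rw [Finset.mem_filter, mem_Cset_iff pb p l i hp hr]
  simp only [Finset.mem_filter, Finset.mem_univ, true_and]
  constructor
  · rintro ⟨⟨h1, h2, h3⟩, h4⟩
    exact ⟨h1, h4, h3⟩
  · rintro ⟨h1, h2, h3⟩
    exact ⟨⟨h1, by omega, h3⟩, h2⟩

lemma down_iff_prefix (B C : Finset (Fin (n + 1))) :
    Down B C ↔ ∀ t : ℕ,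
      (B.filter fun h => h.val ≤ t).card ≤ (C.filter fun h => h.val ≤ t).card := by
  classical
  constructor
  · rintro ⟨θ, hinj, hθ⟩ t
    apply Finset.card_le_card_of_injOn θ
    · intro a ha
      rw [Finset.mem_coe, Finset.mem_filter] at ha ⊢
      obtain ⟨h1, h2⟩ := ha
      obtain ⟨hc, hle⟩ := hθ a h1
      exact ⟨hc, le_trans (Fin.le_def.mp hle) h2⟩
    · exact hinj.mono (Finset.coe_subset.mpr (Finset.filter_subset _ _))
  · intro hP
    have hall : ∀ s : Finset {x // x ∈ B},
        s.card ≤ (s.biUnion fun b => C.filter fun c => c ≤ (b : Fin (n + 1))).card := by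
      intro s
      rcases s.eq_empty_or_nonempty with rfl | hs
      · simp
      · have hne : (s.image fun b : {x // x ∈ B} => (b : Fin (n + 1))).Nonempty := hs.image _
        obtain ⟨bm, hbm, hbmeq⟩ := Finset.mem_image.mp
          ((s.image fun b : {x // x ∈ B} => (b : Fin (n + 1))).max'_mem hne)
        set m := (s.image fun b : {x // x ∈ B} => (b : Fin (n + 1))).max' hne with hm
        have h1 : s.card ≤ (B.filter fun h => h.val ≤ m.val).card := by
          rw [← Finset.card_image_of_injective s Subtype.val_injective]
          apply Finset.card_le_card
          intro x hx
          obtain ⟨b, hb, rfl⟩ := Finset.mem_image.mp hx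
          rw [Finset.mem_filter]
          exact ⟨b.2, Fin.le_def.mp (Finset.le_max' _ _ (Finset.mem_image_of_mem _ hb))⟩
        refine h1.trans ((hP m.val).trans (Finset.card_le_card ?_))
        intro c hc
        rw [Finset.mem_biUnion]
        refine ⟨bm, hbm, ?_⟩
        rw [Finset.mem_filter] at hc ⊢
        refine ⟨hc.1, ?_⟩
        rw [hbmeq]
        exact Fin.le_def.mpr hc.2
    obtain ⟨f, hfinj, hf⟩ := (Finset.all_card_le_biUnion_card_iff_exists_injective _).mp hall
    refine ⟨fun x => if h : x ∈ B then f ⟨x, h⟩ else x, ?_, ?_⟩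
    · intro a ha b hb hab
      rw [Finset.mem_coe] at ha hb
      simp only [dif_pos ha, dif_pos hb] at hab
      exact congrArg Subtype.val (hfinj hab)
    · intro a ha
      have hfa := hf ⟨a, ha⟩
      rw [Finset.mem_filter] at hfa
      simp only [dif_pos ha]
      exact hfa

end Statement7Aux

/-- `i` is normal for `λ` iff `B_{i,N}(λ) ↓ C_{i,N}(λ)`. -/
theorem statement7 (p : ℕ) (hp : p = 0 ∨ p.Prime) (pb : Fin (n + 1) → ZMod 2)
    (lam : Fin (n + 1) → ℤ) (i : Fin (n + 1)) :
    (∃ r : ZMod p, RMinus pb p r lam i) ↔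
      Down (Bset pb p lam i (Fin.last n)) (Cset pb p lam i (Fin.last n)) := by
  classical
  have hr0 : ((res pb lam i : ℤ) : ZMod p) = ((res pb lam i : ℤ) : ZMod p) := rfl
  set r0 : ZMod p := ((res pb lam i : ℤ) : ZMod p) with hr0'
  have hr0eq : r0 = ((res pb lam i : ℤ) : ZMod p) := hr0'
  have hsigi : sig pb p r0 lam i = -1 := (sig_eq_neg_one_iff pb p r0 lam hp i).mpr hr0eq.symm
  have key1 : (∃ r : ZMod p, RMinus pb p r lam i) ↔
      ∀ t : ℕ, Pcnt pb p r0 lam i t ≤ Mcnt pb p r0 lam i t := by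
    constructor
    · rintro ⟨r, hsig, hlt⟩
      have hr : r = r0 := by
        rw [hr0eq]
        exact ((sig_eq_neg_one_iff pb p r lam hp i).mp hsig).symm
      subst hr
      intro t
      by_cases hti : t ≤ i.val
      · rw [Pcnt_eq_zero_of_le pb p r0 lam i hti]
        exact Nat.zero_le _
      · push_neg at hti
        by_cases htn : t ≤ n
        · have hj := hlt ⟨t, by omega⟩ (by rw [Fin.le_def]; exact le_of_lt hti)
          rw [nP_eq pb p r0 lam i hsig, nM_eq pb p r0 lam i hsig _
            (by rw [Fin.le_def]; exact le_of_lt hti)] at hj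
          exact Nat.lt_succ_iff.mp hj
        · push_neg at htn
          have hlast := hlt (Fin.last n) (Fin.le_last i)
          rw [nP_eq pb p r0 lam i hsig, nM_eq pb p r0 lam i hsig _ (Fin.le_last i)] at hlast
          have hstab : Pcnt pb p r0 lam i t = Pcnt pb p r0 lam i (Fin.last n).val :=
            Pcnt_stable pb p r0 lam i (by omega) (by rw [Fin.val_last])
          have hmon : Mcnt pb p r0 lam i (Fin.last n).val ≤ Mcnt pb p r0 lam i t :=
            Mcnt_mono pb p r0 lam i (by rw [Fin.val_last]; omega)
          omega
    · intro hP
      refine ⟨r0, hsigi, fun j hij => ?_⟩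
      rw [nP_eq pb p r0 lam i hsigi, nM_eq pb p r0 lam i hsigi j hij]
      exact Nat.lt_succ_of_le (hP j.val)
  have key2 : (∀ t : ℕ, Pcnt pb p r0 lam i t ≤ Mcnt pb p r0 lam i t) ↔
      (∀ t : ℕ, Bpref pb p lam i t ≤ Cpref pb p lam i t) := by
    constructor
    · intro hP
      have L1 : ∀ s : ℕ, s < n → Pcnt pb p r0 lam i (s + 1) ≤ Mcnt pb p r0 lam i s := by
        intro s hs
        by_cases hk : sig pb p r0 lam (⟨s + 1, by omega⟩ : Fin (n + 1)) = -1
        · have hPP : Pcnt pb p r0 lam i (s + 1) = Pcnt pb p r0 lam i s := by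
            unfold Pcnt
            congr 1
            ext k
            simp only [Finset.mem_filter, Finset.mem_univ, true_and]
            constructor
            · rintro ⟨h1, h2, h3⟩
              refine ⟨h1, ?_, h3⟩
              rcases Nat.lt_or_ge k.val (s + 1) with h | h
              · omega
              · exfalso
                have hkk : k = (⟨s + 1, by omega⟩ : Fin (n + 1)) := Fin.ext (by show k.val = s + 1; omega)
                rw [hkk, hk] at h3
                norm_num at h3
            · rintro ⟨h1, h2, h3⟩
              exact ⟨h1, by omega, h3⟩
          rw [hPP]
          exact hP s
        · have hMM : Mcnt pb p r0 lam i (s + 1) = Mcnt pb p r0 lam i s := by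
            unfold Mcnt
            congr 1
            ext k
            simp only [Finset.mem_filter, Finset.mem_univ, true_and]
            constructor
            · rintro ⟨h1, h2, h3⟩
              refine ⟨h1, ?_, h3⟩
              rcases Nat.lt_or_ge k.val (s + 1) with h | h
              · omega
              · exfalso
                have hkk : k = (⟨s + 1, by omega⟩ : Fin (n + 1)) := Fin.ext (by show k.val = s + 1; omega)
                rw [← hkk] at hk
                exact hk h3
            · rintro ⟨h1, h2, h3⟩
              exact ⟨h1, by omega, h3⟩
          calc Pcnt pb p r0 lam i (s + 1) ≤ Mcnt pb p r0 lam i (s + 1) := hP (s + 1)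
            _ = Mcnt pb p r0 lam i s := hMM
      intro t
      rw [Bpref_eq_Pcnt pb p lam i hr0eq]
      rcases Nat.lt_or_ge t n with ht | ht
      · rw [Cpref_eq_Mcnt pb p lam i hp hr0eq ht]
        exact L1 t ht
      · rcases Nat.eq_zero_or_pos n with hn | hn
        · have h0 : Pcnt pb p r0 lam i (t + 1) = 0 := by
            rw [Pcnt, Finset.card_eq_zero]
            ext k
            simp only [Finset.mem_filter, Finset.mem_univ, true_and, Finset.notMem_empty,
              iff_false, not_and, Fin.lt_def]
            intro hik
            have hk1 := k.isLt
            have hi1 := i.isLt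
            omega
          rw [h0]
          exact Nat.zero_le _
        · calc Pcnt pb p r0 lam i (t + 1)
              = Pcnt pb p r0 lam i ((n - 1) + 1) :=
                Pcnt_stable pb p r0 lam i (by omega) (by omega)
            _ ≤ Mcnt pb p r0 lam i (n - 1) := L1 (n - 1) (by omega)
            _ = Cpref pb p lam i (n - 1) :=
                (Cpref_eq_Mcnt pb p lam i hp hr0eq (by omega)).symm
            _ ≤ Cpref pb p lam i t := Cpref_mono pb p lam i (by omega)
    · intro hB t
      cases t with
      | zero =>
        rw [Pcnt_eq_zero_of_le pb p r0 lam i (Nat.zero_le _)]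
        exact Nat.zero_le _
      | succ s =>
        calc Pcnt pb p r0 lam i (s + 1)
            = Bpref pb p lam i s := (Bpref_eq_Pcnt pb p lam i hr0eq s).symm
          _ ≤ Cpref pb p lam i s := hB s
          _ ≤ Mcnt pb p r0 lam i s := Cpref_le_Mcnt pb p lam i hp hr0eq s
          _ ≤ Mcnt pb p r0 lam i (s + 1) := Mcnt_mono pb p r0 lam i (Nat.le_succ s)
  rw [key1, key2, down_iff_prefix]
  rfl

end Kujawa
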